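/- Let D = {(x,y,z) ∈ [0,1]^3 : y ≤ z ≤ x, y ≤ 2−2x} and define h: D → ℝ by h(x,y,z) = θ^{2−2x} · z^z/(y^y·(z−y)^{z−y}) · (2−2x)^{2−2x}/(y^y·(2−2x−y)^{2−2x−y}) · (2x−z)^{2x−z}/(x^x·(x−z)^{x−z}), with the convention 0^0 = 1. Then sup_{D} h = f(θ)^2, where f(θ) = 2 for 0 < θ ≤ 1 and f(θ) = θ + 1/θ for θ ≥ 1. -/

import Mathlib

noncomputable def f (x : ℝ) : ℝ := if x < 1 then 2 else x + 1 / x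

/-- The domain `D = {(x,y,z) ∈ [0,1]³ : y ≤ z ≤ x, y ≤ 2-2x}`. -/
def D : Set (ℝ × ℝ × ℝ) :=
  {p | p.1 ∈ Set.Icc (0 : ℝ) 1 ∧ p.2.1 ∈ Set.Icc (0 : ℝ) 1 ∧ p.2.2 ∈ Set.Icc (0 : ℝ) 1 ∧
    p.2.1 ≤ p.2.2 ∧ p.2.2 ≤ p.1 ∧ p.2.1 ≤ 2 - 2 * p.1}

/-- `h(x,y,z)` from Lemma 9, with real powers (so `0^0 = 1`). -/
noncomputable def h (θ x y z : ℝ) : ℝ :=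
  θ ^ (2 - 2 * x) * (z ^ z / (y ^ y * (z - y) ^ (z - y)))
    * ((2 - 2 * x) ^ (2 - 2 * x) / (y ^ y * (2 - 2 * x - y) ^ (2 - 2 * x - y)))
    * ((2 * x - z) ^ (2 * x - z) / (x ^ x * (x - z) ^ (x - z)))

lemma self_rpow_pos {b : ℝ} (hb : 0 ≤ b) : 0 < b ^ b := by
  rcases hb.eq_or_lt with h | h
  · simp [← h]
  · exact Real.rpow_pos_of_pos h b

lemma rpow_two' (x : ℝ) : x ^ ((2:ℝ)) = x ^ 2 := by
  rw [show (2:ℝ) = ((2:ℕ):ℝ) by norm_num, Real.rpow_natCast]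

lemma gibbs {p q b c : ℝ} (hp : 0 < p) (hq : 0 < q) (hpq : p + q = 1)
    (hb : 0 ≤ b) (hc : 0 ≤ c) :
    (b + c) ^ (b + c) * p ^ b * q ^ c ≤ b ^ b * c ^ c := by
  rcases hb.eq_or_lt with hb0 | hb0
  · subst hb0
    simp only [zero_add, Real.rpow_zero, mul_one, one_mul]
    have h1 : q ^ c ≤ 1 := Real.rpow_le_one hq.le (by linarith) hc
    have h2 : (0:ℝ) ≤ c ^ c := Real.rpow_nonneg hc c
    nlinarith [mul_le_mul_of_nonneg_left h1 h2]
  rcases hc.eq_or_lt with hc0 | hc0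
  · subst hc0
    simp only [add_zero, Real.rpow_zero, mul_one]
    have h1 : p ^ b ≤ 1 := Real.rpow_le_one hp.le (by linarith) hb
    have h2 : (0:ℝ) ≤ b ^ b := Real.rpow_nonneg hb b
    nlinarith [mul_le_mul_of_nonneg_left h1 h2]
  -- main case b, c > 0
  have ha : 0 < b + c := by linarith
  have hL : 0 < (b + c) ^ (b + c) * p ^ b * q ^ c := by positivity
  have hR : 0 < b ^ b * c ^ c := by positivity
  rw [← Real.log_le_log_iff hL hR]
  rw [Real.log_mul (by positivity) (by positivity), Real.log_mul (by positivity) (by positivity),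
    Real.log_mul (by positivity) (by positivity),
    Real.log_rpow ha, Real.log_rpow hp, Real.log_rpow hq, Real.log_rpow hb0, Real.log_rpow hc0]
  have k1 : b * (Real.log p + Real.log (b + c) - Real.log b) ≤ p * (b + c) - b := by
    have h1 : Real.log (p * (b + c) / b) ≤ p * (b + c) / b - 1 :=
      Real.log_le_sub_one_of_pos (by positivity)
    rw [Real.log_div (by positivity) hb0.ne', Real.log_mul hp.ne' ha.ne'] at h1
    have h2 := mul_le_mul_of_nonneg_left h1 hb0.le
    calc b * (Real.log p + Real.log (b + c) - Real.log b)
        ≤ b * (p * (b + c) / b - 1) := h2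
      _ = p * (b + c) - b := by field_simp
  have k2 : c * (Real.log q + Real.log (b + c) - Real.log c) ≤ q * (b + c) - c := by
    have h1 : Real.log (q * (b + c) / c) ≤ q * (b + c) / c - 1 :=
      Real.log_le_sub_one_of_pos (by positivity)
    rw [Real.log_div (by positivity) hc0.ne', Real.log_mul hq.ne' ha.ne'] at h1
    have h2 := mul_le_mul_of_nonneg_left h1 hc0.le
    calc c * (Real.log q + Real.log (b + c) - Real.log c)
        ≤ c * (q * (b + c) / c - 1) := h2
      _ = q * (b + c) - c := by field_simp
  have hs : p * (b + c) + q * (b + c) = b + c := by linear_combination (b + c) * hpq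
  nlinarith [k1, k2]

lemma factor_le {p q b c : ℝ} (hp : 0 < p) (hq : 0 < q) (hpq : p + q = 1)
    (hb : 0 ≤ b) (hc : 0 ≤ c) :
    (b + c) ^ (b + c) / (b ^ b * c ^ c) ≤ (p ^ b * q ^ c)⁻¹ := by
  have hD : 0 < b ^ b * c ^ c := mul_pos (self_rpow_pos hb) (self_rpow_pos hc)
  have hP : 0 < p ^ b * q ^ c := by positivity
  rw [div_le_iff₀ hD, inv_mul_eq_div, le_div_iff₀ hP]
  calc (b + c) ^ (b + c) * (p ^ b * q ^ c) = (b + c) ^ (b + c) * p ^ b * q ^ c := by ring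
    _ ≤ b ^ b * c ^ c := gibbs hp hq hpq hb hc

lemma h_le {θ p q x y z : ℝ} (hθ : 0 < θ) (hp : 0 < p) (hq : 0 < q) (hpq : p + q = 1)
    (hx0 : 0 ≤ x) (hx1 : x ≤ 1) (hy0 : 0 ≤ y) (hyz : y ≤ z) (hzx : z ≤ x)
    (hy2 : y ≤ 2 - 2 * x) :
    h θ x y z ≤ θ ^ (2 - 2 * x) / (p ^ (2 - x) * q ^ x) := by
  have hz0 : 0 ≤ z := le_trans hy0 hyz
  have hzy : 0 ≤ z - y := by linarith
  have hxz : 0 ≤ x - z := by linarith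
  have h2x : 0 ≤ 2 - 2 * x - y := by linarith
  have b1 : z ^ z / (y ^ y * (z - y) ^ (z - y)) ≤ (p ^ y * q ^ (z - y))⁻¹ := by
    have := factor_le hp hq hpq hy0 hzy
    rwa [show y + (z - y) = z by ring] at this
  have b2 : (2 - 2 * x) ^ (2 - 2 * x) / (y ^ y * (2 - 2 * x - y) ^ (2 - 2 * x - y))
      ≤ (q ^ y * p ^ (2 - 2 * x - y))⁻¹ := by
    have := factor_le hq hp (by linarith) hy0 h2x
    rwa [show y + (2 - 2 * x - y) = 2 - 2 * x by ring] at this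
  have b3 : (2 * x - z) ^ (2 * x - z) / (x ^ x * (x - z) ^ (x - z))
      ≤ (p ^ x * q ^ (x - z))⁻¹ := by
    have := factor_le hp hq hpq hx0 hxz
    rwa [show x + (x - z) = 2 * x - z by ring] at this
  have key : θ ^ (2 - 2 * x) * (p ^ y * q ^ (z - y))⁻¹ * (q ^ y * p ^ (2 - 2 * x - y))⁻¹
      * (p ^ x * q ^ (x - z))⁻¹ = θ ^ (2 - 2 * x) / (p ^ (2 - x) * q ^ x) := by
    have eP : p ^ y * p ^ (2 - 2 * x - y) * p ^ x = p ^ (2 - x) := by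
      rw [← Real.rpow_add hp, ← Real.rpow_add hp]
      congr 1; ring
    have eQ : q ^ (z - y) * q ^ y * q ^ (x - z) = q ^ x := by
      rw [← Real.rpow_add hq, ← Real.rpow_add hq]
      congr 1; ring
    rw [← eP, ← eQ]; field_simp; try ring
    try tauto
  rw [← key]
  unfold h
  gcongr
  all_goals
    apply div_nonneg
    · apply Real.rpow_nonneg; linarith
    · refine (mul_pos (self_rpow_pos ?_) (self_rpow_pos ?_)).le <;> linarith

lemma inv_val {θ q : ℝ} (hθ : 0 < θ) (hq : 0 < q) (hq1 : q * (1 + θ ^ 2) = 1) :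
    (θ ^ 2 * q ^ 2)⁻¹ = (θ + 1 / θ) ^ 2 := by
  field_simp
  linear_combination (-(q*(1+θ^2)+1)) * hq1

/-- the bound `θ^(2-2x)/(p^(2-x) q^x)` is constantly `(θ+1/θ)²` when `p = θ² q`. -/
lemma bound_eq {θ p q : ℝ} (hθ : 0 < θ) (hq : 0 < q) (hpq : p + q = 1)
    (hpq2 : p = θ ^ 2 * q) (x : ℝ) :
    θ ^ (2 - 2 * x) / (p ^ (2 - x) * q ^ x) = (θ + 1 / θ) ^ 2 := by
  have hp : 0 < p := by rw [hpq2]; positivity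
  have eP : p ^ (2 - x) = θ ^ (4 - 2 * x) * q ^ (2 - x) := by
    rw [hpq2, Real.mul_rpow (by positivity) hq.le]
    congr 1
    rw [← Real.rpow_natCast θ 2, ← Real.rpow_mul hθ.le]
    congr 1; push_cast; ring
  have eQ : q ^ (2 - x) * q ^ x = q ^ (2:ℝ) := by
    rw [← Real.rpow_add hq]; norm_num
  have eT : θ ^ (2 - 2 * x) / θ ^ (4 - 2 * x) = (θ ^ 2)⁻¹ := by
    rw [← Real.rpow_sub hθ, show (2 - 2*x) - (4 - 2*x) = -(2:ℝ) by ring,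
      Real.rpow_neg hθ.le, rpow_two']
  have hq1 : q * (1 + θ ^ 2) = 1 := by linear_combination hpq - hpq2
  calc θ ^ (2 - 2 * x) / (p ^ (2 - x) * q ^ x)
      = (θ ^ (2 - 2 * x) / θ ^ (4 - 2 * x)) / (q ^ (2 - x) * q ^ x) := by
        rw [eP]; ring
    _ = (θ ^ 2)⁻¹ / q ^ (2:ℝ) := by rw [eT, eQ]
    _ = (θ ^ 2 * q ^ 2)⁻¹ := by rw [rpow_two']; ring
    _ = (θ + 1 / θ) ^ 2 := inv_val hθ hq hq1

/-- splitting a factor at the optimum point -/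
lemma factor_eq {u v t : ℝ} (hu : 0 < u) (hv : 0 < v) (huv : u + v = 1) (ht : 0 ≤ t) :
    t ^ t / ((u * t) ^ (u * t) * (v * t) ^ (v * t)) = (u ^ (u * t) * v ^ (v * t))⁻¹ := by
  rcases ht.eq_or_lt with h | h
  · simp [← h]
  · have hD : (u * t) ^ (u * t) * (v * t) ^ (v * t)
        = (u ^ (u * t) * v ^ (v * t)) * t ^ t := by
      rw [Real.mul_rpow hu.le ht, Real.mul_rpow hv.le ht]
      have : t ^ (u * t) * t ^ (v * t) = t ^ t := by
        rw [← Real.rpow_add h]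
        congr 1; linear_combination t * huv
      linear_combination (u ^ (u*t) * v ^ (v*t)) * this
    rw [hD]
    have h1 : (0:ℝ) < t ^ t := self_rpow_pos ht
    have h2 : (0:ℝ) < u ^ (u*t) * v ^ (v*t) := by positivity
    field_simp

lemma attain {θ p q x0 y0 z0 s t a : ℝ} (hθ : 0 < θ) (hp : 0 < p) (hq : 0 < q)
    (hpq : p + q = 1) (hpq2 : p = θ ^ 2 * q)
    (ht : 0 ≤ t) (hs : 0 ≤ s) (ha : 0 ≤ a)
    (e0 : 2 - 2 * x0 = s) (ez1 : z0 - y0 = q * t) (ez2 : y0 = p * t) (ez3 : z0 = t)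
    (ey3 : y0 = q * s)
    (e5 : 2 * x0 - z0 = a) (ex2 : x0 - z0 = q * a) (ex1 : x0 = p * a)
    (esum : t + s + a = 2) (es : s = 2 * (p - q)) :
    h θ x0 y0 z0 = (θ + 1 / θ) ^ 2 := by
  have hq' : 0 < 1 - q := by linarith
  have F1eq : z0 ^ z0 / (y0 ^ y0 * (z0 - y0) ^ (z0 - y0))
      = (p ^ (p * t) * q ^ (q * t))⁻¹ := by
    rw [ez1, ez2, ez3]
    exact factor_eq hp hq hpq ht
  have F2eq : (2 - 2 * x0) ^ (2 - 2 * x0) / (y0 ^ y0 * (2 - 2 * x0 - y0) ^ (2 - 2 * x0 - y0))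
      = (q ^ (q * s) * p ^ (p * s))⁻¹ := by
    rw [e0, show s - y0 = p * s by linear_combination -ey3 - s*hpq, ey3]
    exact factor_eq hq hp (by linarith) hs
  have F3eq : (2 * x0 - z0) ^ (2 * x0 - z0) / (x0 ^ x0 * (x0 - z0) ^ (x0 - z0))
      = (p ^ (p * a) * q ^ (q * a))⁻¹ := by
    rw [e5, ex2, ex1]
    exact factor_eq hp hq hpq ha
  unfold h
  rw [F1eq, F2eq, F3eq, e0]
  have eP : p ^ (p * t) * p ^ (p * s) * p ^ (p * a) = p ^ (2 * p) := by
    rw [← Real.rpow_add hp, ← Real.rpow_add hp]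
    congr 1; linear_combination p * esum
  have eQ : q ^ (q * t) * q ^ (q * s) * q ^ (q * a) = q ^ (2 * q) := by
    rw [← Real.rpow_add hq, ← Real.rpow_add hq]
    congr 1; linear_combination q * esum
  have key : θ ^ s = p ^ (p - q) / q ^ (p - q) := by
    rw [es, show (2 : ℝ) * (p - q) = (((2:ℕ):ℝ)) * (p - q) by norm_num,
      Real.rpow_mul hθ.le, Real.rpow_natCast,
      show θ ^ 2 = p / q by rw [hpq2]; field_simp,
      Real.div_rpow hp.le hq.le]
  rw [key]
  have e1 : p ^ (p - q) / p ^ (2 * p) = p⁻¹ := by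
    rw [← Real.rpow_sub hp, show p - q - 2 * p = -(1:ℝ) by linarith,
      Real.rpow_neg_one]
  have e2 : q ^ (p - q) * q ^ (2 * q) = q := by
    rw [← Real.rpow_add hq, show p - q + 2 * q = (1:ℝ) by linarith, Real.rpow_one]
  calc p ^ (p - q) / q ^ (p - q) * (p ^ (p * t) * q ^ (q * t))⁻¹
        * (q ^ (q * s) * p ^ (p * s))⁻¹ * (p ^ (p * a) * q ^ (q * a))⁻¹
      = (p ^ (p - q) / p ^ (2 * p)) / (q ^ (p - q) * q ^ (2 * q)) := by
        rw [← eP, ← eQ]; field_simp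
        try ring
        try tauto
    _ = p⁻¹ / q := by rw [e1, e2]
    _ = (θ ^ 2 * q ^ 2)⁻¹ := by rw [hpq2]; field_simp
    _ = (θ + 1 / θ) ^ 2 := inv_val hθ hq (by linear_combination hpq - hpq2)

lemma h_one (θ : ℝ) : h θ 1 0 0 = 4 := by
  unfold h
  norm_num [Real.rpow_zero, Real.one_rpow, rpow_two']

/-- `sup_D h = f(θ)²`. -/
theorem stmt14 (θ : ℝ) (hθ : 0 < θ) :
    sSup ((fun p : ℝ × ℝ × ℝ => h θ p.1 p.2.1 p.2.2) '' D) = f θ ^ 2 := by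
  rcases lt_or_ge θ 1 with hθ1 | hθ1
  · -- θ < 1 : supremum is 4, attained at (1,0,0)
    have hf : f θ = 2 := if_pos hθ1
    rw [hf, show (2:ℝ)^2 = 4 by norm_num]
    apply IsGreatest.csSup_eq
    constructor
    · exact ⟨(1, 0, 0), by constructor <;> norm_num [D], h_one θ⟩
    · rintro v ⟨⟨x, y, z⟩, hm, rfl⟩
      obtain ⟨⟨hx0, hx1⟩, ⟨hy0, -⟩, ⟨hz0, -⟩, hyz, hzx, hy2⟩ := hm
      have half : (0:ℝ) < 1/2 := by norm_num
      have hb := h_le hθ half half (by norm_num) hx0 hx1 hy0 hyz hzx hy2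
      have e : ((1:ℝ)/2) ^ ((2:ℝ) - x) * ((1:ℝ)/2) ^ x = 1/4 := by
        rw [← Real.rpow_add half, show (2:ℝ) - x + x = 2 by ring, rpow_two']
        norm_num
      rw [e] at hb
      have hθx : θ ^ ((2:ℝ) - 2*x) ≤ 1 := Real.rpow_le_one hθ.le hθ1.le (by linarith)
      calc h θ x y z ≤ θ ^ ((2:ℝ) - 2*x) / (1/4) := hb
        _ = 4 * θ ^ ((2:ℝ) - 2*x) := by ring
        _ ≤ 4 * 1 := by nlinarith [Real.rpow_nonneg hθ.le ((2:ℝ) - 2*x)]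
        _ = 4 := by norm_num
  · -- θ ≥ 1
    have hf : f θ = θ + 1/θ := if_neg (not_lt.mpr hθ1)
    rw [hf]
    have key : ∀ p : ℝ, 1/2 ≤ p → p < 1 → p = θ^2*(1-p) →
        IsGreatest ((fun pt : ℝ × ℝ × ℝ => h θ pt.1 pt.2.1 pt.2.2) '' D) ((θ+1/θ)^2) := by
      intro p hp2 hp1 hpd
      have hp : 0 < p := by linarith
      have hq : 0 < 1 - p := by linarith
      have hpq : p + (1-p) = 1 := by ring
      constructor
      · -- attained at (2(1−p), 2(1−p)(2p−1), 2(1−p)(2p−1)/p)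
        refine ⟨(2*(1-p), 2*(1-p)*(p-(1-p)), 2*(1-p)*(p-(1-p))/p), ?_, ?_⟩
        · simp only [D, Set.mem_setOf_eq, Set.mem_Icc]
          refine ⟨⟨by linarith, by linarith⟩, ⟨by nlinarith, ?_⟩,
            ⟨?_, ?_⟩, ?_, ?_, ?_⟩
          · nlinarith [sq_nonneg (2*p - 3/2)]
          · have : (0:ℝ) ≤ 2*(1-p)*(p-(1-p)) := by nlinarith
            positivity
          · rw [div_le_one hp]
            nlinarith [sq_nonneg (2*p - 5/4)]
          · rw [le_div_iff₀ hp]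
            nlinarith [mul_nonneg (mul_nonneg (by linarith : (0:ℝ) ≤ 2*(1-p))
              (by linarith : (0:ℝ) ≤ p-(1-p))) (by linarith : (0:ℝ) ≤ 1-p)]
          · rw [div_le_iff₀ hp]
            nlinarith
          · nlinarith
        · refine attain (t := 2*(1-p)*(p-(1-p))/p) (s := 2*(p-(1-p))) (a := 2*(1-p)/p)
            hθ hp hq hpq hpd ?_ ?_ ?_ ?_ ?_ ?_ rfl ?_ ?_ ?_ ?_ ?_ ?_
          · have : (0:ℝ) ≤ 2*(1-p)*(p-(1-p)) := by nlinarith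
            positivity
          · nlinarith
          · positivity
          · ring
          · field_simp
          · field_simp
          · ring
          · field_simp; ring
          · field_simp; ring
          · field_simp
          · field_simp; ring
          · ring
      · rintro v ⟨⟨x, y, z⟩, hm, rfl⟩
        obtain ⟨⟨hx0, hx1⟩, ⟨hy0, -⟩, ⟨hz0, -⟩, hyz, hzx, hy2⟩ := hm
        have hb := h_le hθ hp hq hpq hx0 hx1 hy0 hyz hzx hy2
        calc h θ x y z ≤ θ ^ (2 - 2*x) / (p ^ (2 - x) * (1-p) ^ x) := hb
          _ = (θ + 1/θ)^2 := bound_eq hθ hq hpq hpd x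
    have h1 : (0:ℝ) < 1 + θ^2 := by positivity
    refine (key (θ^2/(1+θ^2)) ?_ ?_ ?_).csSup_eq
    · rw [le_div_iff₀ h1]; nlinarith
    · rw [div_lt_one h1]; nlinarith
    · field_simp
      ring
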